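/- arXiv:2007.12538 — 3 statements merged into one kernel-verified Lean document; each statement's English description precedes it below -/
import Mathlib

section
/- Let G be a finite abelian group with character group A, and let 𝓑ₙ(G) be the ℤ-module generated by symbols [a₁,…,aₙ] of n-tuples of elements of A (up to order) that generate A, subject to the relations: for all 2 ≤ j ≤ n, [a₁,…,aₙ] = ∑_{1≤i≤j, a_i ≠ a_{i'} ∀ i'<i} [a₁−a_i,…,a_i,…,a_j−a_i,a_{j+1},…,aₙ]. Then for n ≥ 2, the relations with j > 2 are consequences of the relations with j = 2; that is, 𝓑ₙ(G) is presented by the generators and only the j = 2 relations. -/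
open Finset Function

private def KPT_T {n : ℕ} {A : Type*} [AddCommGroup A] (k : ℕ) (a : Fin n → A) (i : Fin n) :
    Fin n → A :=
  fun m => if m = i then a i else if m.val < k then a m - a i else a m

private lemma KPT_T_apply_self {n : ℕ} {A : Type*} [AddCommGroup A] (k : ℕ) (a : Fin n → A)
    (i : Fin n) : KPT_T k a i i = a i := by simp [KPT_T]

private lemma KPT_T_apply_lt {n : ℕ} {A : Type*} [AddCommGroup A] (k : ℕ) (a : Fin n → A)
    {i m : Fin n} (hmi : m ≠ i) (hm : m.val < k) : KPT_T k a i m = a m - a i := by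
  simp [KPT_T, hmi, hm]

private lemma KPT_T_apply_ge {n : ℕ} {A : Type*} [AddCommGroup A] (k : ℕ) (a : Fin n → A)
    {i m : Fin n} (hmi : m ≠ i) (hm : ¬ m.val < k) : KPT_T k a i m = a m := by
  simp [KPT_T, hmi, hm]

private lemma KPT_T_gen {n : ℕ} {A : Type*} [AddCommGroup A] (k : ℕ) {a : Fin n → A}
    (ha : AddSubgroup.closure (Set.range a) = ⊤) (i : Fin n) :
    AddSubgroup.closure (Set.range (KPT_T k a i)) = ⊤ := by
  rw [eq_top_iff, ← ha, AddSubgroup.closure_le]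
  rintro x ⟨m, rfl⟩
  rcases eq_or_ne m i with rfl | hmi
  · exact KPT_T_apply_self k a m ▸ AddSubgroup.subset_closure ⟨m, rfl⟩
  by_cases hmk : m.val < k
  · have h1 : a m = KPT_T k a i m + KPT_T k a i i := by
      rw [KPT_T_apply_lt k a hmi hmk, KPT_T_apply_self, sub_add_cancel]
    rw [h1]
    exact AddSubgroup.add_mem _ (AddSubgroup.subset_closure ⟨m, rfl⟩)
      (AddSubgroup.subset_closure ⟨i, rfl⟩)
  · rw [← KPT_T_apply_ge k a hmi hmk]
    exact AddSubgroup.subset_closure ⟨m, rfl⟩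

private lemma KPT_T_two_eq {n : ℕ} {A : Type*} [AddCommGroup A] (a : Fin n → A)
    {p q : Fin n} (hp : p.val < 2) (hq : q.val < 2) (hpq : p ≠ q) :
    KPT_T 2 a p = Function.update a q (a q - a p) := by
  have hpq' : p.val ≠ q.val := fun h => hpq (Fin.ext h)
  funext m
  rcases eq_or_ne m p with rfl | hmp
  · rw [Function.update_of_ne hpq, KPT_T_apply_self]
  rcases eq_or_ne m q with rfl | hmq
  · rw [Function.update_self, KPT_T_apply_lt 2 a hmp hq]
  · have h1 : m.val ≠ p.val := fun h => hmp (Fin.ext h)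
    have h2 : m.val ≠ q.val := fun h => hmq (Fin.ext h)
    rw [Function.update_of_ne hmq, KPT_T_apply_ge 2 a hmp (by omega)]

private lemma KPT_upd_succ {n : ℕ} {A : Type*} [AddCommGroup A] (a : Fin n → A) {j : ℕ}
    {i J : Fin n} (hJ : J.val = j) (hiJ : i ≠ J) :
    Function.update (KPT_T j a i) J (a J - a i) = KPT_T (j + 1) a i := by
  funext m
  rcases eq_or_ne m J with rfl | hmJ
  · rw [Function.update_self, KPT_T_apply_lt (j+1) a hiJ.symm (by omega)]
  · rw [Function.update_of_ne hmJ]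
    rcases eq_or_ne m i with rfl | hmi
    · rw [KPT_T_apply_self, KPT_T_apply_self]
    · have hmj : m.val ≠ j := fun h => hmJ (Fin.ext (h.trans hJ.symm))
      by_cases hm : m.val < j
      · rw [KPT_T_apply_lt j a hmi hm, KPT_T_apply_lt (j+1) a hmi (by omega)]
      · rw [KPT_T_apply_ge j a hmi hm, KPT_T_apply_ge (j+1) a hmi (by omega)]

private lemma KPT_upd_d {n : ℕ} {A : Type*} [AddCommGroup A] (a : Fin n → A) {j : ℕ}
    {i J : Fin n} (hJ : J.val = j) (hi : i.val < j) :
    Function.update (KPT_T j a i) i (a i - a J) = KPT_T j (KPT_T (j + 1) a J) i := by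
  have hiJ : i ≠ J := fun h => by rw [h, hJ] at hi; omega
  have hei : KPT_T (j+1) a J i = a i - a J := KPT_T_apply_lt (j+1) a hiJ (by omega)
  funext m
  rcases eq_or_ne m i with rfl | hmi
  · rw [Function.update_self, KPT_T_apply_self, hei]
  · rw [Function.update_of_ne hmi]
    by_cases hm : m.val < j
    · have hmJ : m ≠ J := fun h => by rw [h, hJ] at hm; omega
      rw [KPT_T_apply_lt j a hmi hm, KPT_T_apply_lt j (KPT_T (j+1) a J) hmi hm, hei,
        KPT_T_apply_lt (j+1) a hmJ (by omega), sub_sub_sub_cancel_right]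
    · rw [KPT_T_apply_ge j a hmi hm, KPT_T_apply_ge j (KPT_T (j+1) a J) hmi hm]
      rcases eq_or_ne m J with rfl | hmJ
      · rw [KPT_T_apply_self]
      · have hmj : m.val ≠ j := fun h => hmJ (Fin.ext (h.trans hJ.symm))
        rw [KPT_T_apply_ge (j+1) a hmJ (by omega)]

private lemma KPT_T_fixed {n : ℕ} {A : Type*} [AddCommGroup A] {e : Fin n → A} (j : ℕ)
    {i : Fin n} (h : e i = 0) : KPT_T j e i = e := by
  funext m
  rcases eq_or_ne m i with rfl | hmi
  · rw [KPT_T_apply_self]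
  by_cases hm : m.val < j
  · rw [KPT_T_apply_lt j e hmi hm, h, sub_zero]
  · rw [KPT_T_apply_ge j e hmi hm]

/-- Presentation of the group `𝓑ₙ(G)` of Kontsevich–Pestun–Tschinkel by the `j = 2` relations
only: if `s` is any assignment of elements of an abelian group `M` to unordered `n`-tuples of
elements of the (finite abelian) character group `A` that generate `A`, and `s` satisfies the
defining relation of `𝓑ₙ(G)` for `j = 2`, then `s` satisfies the relation for every
`2 ≤ j ≤ n`.  (In the relation, the `i`-th slot carries `a i`, slots `m < j` with `m ≠ i`
carry `a m - a i`, and slots `m ≥ j` are unchanged; the sum runs over those `i < j` such that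
`a i` differs from all earlier `a i'`, `i' < i`.) -/
theorem BnG_presented_by_j_eq_two_relations
    {A : Type*} [AddCommGroup A] [Finite A] [DecidableEq A]
    {M : Type*} [AddCommGroup M] (n : ℕ) (hn : 2 ≤ n)
    (s : (Fin n → A) → M)
    (hsym : ∀ (a : Fin n → A) (σ : Equiv.Perm (Fin n)), s (a ∘ σ) = s a)
    (hrel2 : ∀ a : Fin n → A, AddSubgroup.closure (Set.range a) = ⊤ →
      s a = ∑ i ∈ Finset.univ.filter
          (fun i : Fin n => i.val < 2 ∧ ∀ i' : Fin n, i'.val < i.val → a i' ≠ a i),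
        s (fun m => if m = i then a i else if m.val < 2 then a m - a i else a m)) :
    ∀ j : ℕ, 2 ≤ j → j ≤ n →
      ∀ a : Fin n → A, AddSubgroup.closure (Set.range a) = ⊤ →
      s a = ∑ i ∈ Finset.univ.filter
          (fun i : Fin n => i.val < j ∧ ∀ i' : Fin n, i'.val < i.val → a i' ≠ a i),
        s (fun m => if m = i then a i else if m.val < j then a m - a i else a m) := by
  set z : Fin n := ⟨0, by omega⟩ with hzdef
  set o : Fin n := ⟨1, by omega⟩ with hodef
  have hzv : z.val = 0 := rfl
  have hov : o.val = 1 := rfl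
  have hzo : z ≠ o := Fin.ne_of_val_ne (by omega)
  -- Step 1: the `j = 2` relation in two-term form.
  have key2 : ∀ a : Fin n → A, AddSubgroup.closure (Set.range a) = ⊤ →
      s a = s (Function.update a o (a o - a z))
        + (if a o = a z then 0 else s (Function.update a z (a z - a o))) := by
    intro a ha
    have hfilter : (Finset.univ.filter
        (fun i : Fin n => i.val < 2 ∧ ∀ i' : Fin n, i'.val < i.val → a i' ≠ a i))
        = if a o = a z then {z} else ({z, o} : Finset (Fin n)) := by
      ext i
      simp only [Finset.mem_filter, Finset.mem_univ, true_and]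
      split_ifs with h
      · simp only [Finset.mem_singleton]
        constructor
        · rintro ⟨h1, h2⟩
          by_contra hiz
          have h3 : i.val ≠ z.val := fun hh => hiz (Fin.ext hh)
          have hio : i = o := Fin.ext (by omega)
          subst hio
          exact h2 z (by omega) h.symm
        · rintro rfl
          exact ⟨by omega, fun i' hi' => absurd hi' (by omega)⟩
      · simp only [Finset.mem_insert, Finset.mem_singleton]
        constructor
        · rintro ⟨h1, h2⟩
          by_cases hiz : i = z
          · exact Or.inl hiz
          · have h3 : i.val ≠ z.val := fun hh => hiz (Fin.ext hh)
            exact Or.inr (Fin.ext (by omega))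
        · rintro (rfl | rfl)
          · exact ⟨by omega, fun i' hi' => absurd hi' (by omega)⟩
          · refine ⟨by omega, fun i' hi' => ?_⟩
            have h4 : i' = z := Fin.ext (by omega)
            rw [h4]
            exact fun hcon => h hcon.symm
    rw [hrel2 a ha, hfilter]
    split_ifs with h
    · rw [Finset.sum_singleton, add_zero]
      exact congrArg s (KPT_T_two_eq a (by omega) (by omega) hzo)
    · rw [Finset.sum_pair hzo]
      exact congrArg₂ (· + ·)
        (congrArg s (KPT_T_two_eq a (by omega) (by omega) hzo))
        (congrArg s (KPT_T_two_eq a (by omega) (by omega) hzo.symm))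
  -- Step 2: the `j = 2` relation at an arbitrary pair of distinct positions.
  have gen2 : ∀ p q : Fin n, p ≠ q → ∀ a : Fin n → A,
      AddSubgroup.closure (Set.range a) = ⊤ →
      s a = s (Function.update a q (a q - a p))
        + (if a q = a p then 0 else s (Function.update a p (a p - a q))) := by
    intro p q hpq a ha
    have hzr : z ≠ Equiv.swap z p q := by
      intro h
      have h2 := congrArg (Equiv.swap z p) h
      rw [Equiv.swap_apply_left, Equiv.swap_apply_self] at h2
      exact hpq h2
    set σ : Equiv.Perm (Fin n) := (Equiv.swap o (Equiv.swap z p q)).trans (Equiv.swap z p)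
      with hσdef
    have hσz : σ z = p := by
      rw [hσdef]
      simp only [Equiv.trans_apply]
      rw [Equiv.swap_apply_of_ne_of_ne hzo hzr, Equiv.swap_apply_left]
    have hσo : σ o = q := by
      rw [hσdef]
      simp only [Equiv.trans_apply]
      rw [Equiv.swap_apply_left, Equiv.swap_apply_self]
    have hgen : AddSubgroup.closure (Set.range (a ∘ σ)) = ⊤ := by
      rw [Function.Surjective.range_comp σ.surjective]; exact ha
    have hb := key2 (a ∘ σ) hgen
    have hco : (a ∘ σ) o = a q := by rw [Function.comp_apply, hσo]
    have hcz : (a ∘ σ) z = a p := by rw [Function.comp_apply, hσz]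
    rw [hco, hcz] at hb
    have h1 : Function.update a q (a q - a p) ∘ σ
        = Function.update (a ∘ σ) o (a q - a p) := by
      rw [← hσo, Function.update_comp_equiv, Equiv.symm_apply_apply]
    have h2 : Function.update a p (a p - a q) ∘ σ
        = Function.update (a ∘ σ) z (a p - a q) := by
      rw [← hσz, Function.update_comp_equiv, Equiv.symm_apply_apply]
    rw [← h1, ← h2, hsym a σ, hsym (Function.update a q (a q - a p)) σ,
      hsym (Function.update a p (a p - a q)) σ] at hb
    exact hb
  -- Step 3: induction on `j`.
  intro j hj2
  induction j, hj2 using Nat.le_induction with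
  | base => exact fun _ a ha => hrel2 a ha
  | succ j hj IH =>
    intro hjn a ha
    have hIH := IH (by omega)
    have hJlt : j < n := by omega
    set J : Fin n := ⟨j, hJlt⟩ with hJdef
    have hJv : J.val = j := rfl
    set Fj := Finset.univ.filter
      (fun i : Fin n => i.val < j ∧ ∀ i' : Fin n, i'.val < i.val → a i' ≠ a i) with hFj
    have hJF : J ∉ Fj := by
      rw [hFj]
      intro h
      have h1 := (Finset.mem_filter.mp h).2.1
      omega
    -- per-term application of the j=2 relation at positions (i, J)
    have hterm : ∀ i ∈ Fj, s (KPT_T j a i)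
        = s (KPT_T (j+1) a i)
          + (if a J = a i then 0 else s (KPT_T j (KPT_T (j+1) a J) i)) := by
      intro i hi
      rw [hFj, Finset.mem_filter] at hi
      obtain ⟨-, hij, -⟩ := hi
      have hiJ : i ≠ J := fun h => by
        rw [h, hJv] at hij; omega
      have hbJ : KPT_T j a i J = a J := KPT_T_apply_ge j a hiJ.symm (by omega)
      have hbi : KPT_T j a i i = a i := KPT_T_apply_self j a i
      have h := gen2 i J hiJ (KPT_T j a i) (KPT_T_gen j ha i)
      rw [hbJ, hbi, KPT_upd_succ a hJv hiJ, KPT_upd_d a hJv hij] at h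
      exact h
    have hgene : AddSubgroup.closure (Set.range (KPT_T (j+1) a J)) = ⊤ := KPT_T_gen _ ha J
    have heval : ∀ m : Fin n, m.val < j → KPT_T (j+1) a J m = a m - a J := by
      intro m hm
      have hmJ : m ≠ J := fun h => by rw [h, hJv] at hm; omega
      exact KPT_T_apply_lt (j+1) a hmJ (by omega)
    have hFe : Finset.univ.filter
        (fun i : Fin n => i.val < j ∧ ∀ i' : Fin n, i'.val < i.val →
          KPT_T (j+1) a J i' ≠ KPT_T (j+1) a J i) = Fj := by
      rw [hFj]
      ext i
      simp only [Finset.mem_filter, Finset.mem_univ, true_and]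
      constructor
      · rintro ⟨h1, h2⟩
        exact ⟨h1, fun i' hi' hcon => h2 i' hi'
          (by rw [heval i h1, heval i' (lt_trans hi' h1), hcon])⟩
      · rintro ⟨h1, h2⟩
        refine ⟨h1, fun i' hi' hcon => h2 i' hi' ?_⟩
        rw [heval i h1, heval i' (lt_trans hi' h1)] at hcon
        exact sub_left_inj.mp hcon
    have hstep2 : s (KPT_T (j+1) a J) = ∑ i ∈ Fj, s (KPT_T j (KPT_T (j+1) a J) i) := by
      have h := hIH (KPT_T (j+1) a J) hgene
      rw [hFe] at h
      exact h
    have hstep1 : s a = (∑ i ∈ Fj, s (KPT_T (j+1) a i))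
        + ∑ i ∈ Fj, (if a J = a i then (0:M) else s (KPT_T j (KPT_T (j+1) a J) i)) := by
      rw [← Finset.sum_add_distrib, hFj, hIH a ha]
      exact Finset.sum_congr rfl fun i hi => hterm i (by rw [hFj]; exact hi)
    have main : s a = ∑ i ∈ Finset.univ.filter
        (fun i : Fin n => i.val < j + 1 ∧ ∀ i' : Fin n, i'.val < i.val → a i' ≠ a i),
        s (KPT_T (j+1) a i) := by
      by_cases hnew : ∀ i' : Fin n, i'.val < j → a i' ≠ a J
      · have hF : Finset.univ.filter
            (fun i : Fin n => i.val < j + 1 ∧ ∀ i' : Fin n, i'.val < i.val → a i' ≠ a i)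
            = insert J Fj := by
          rw [hFj]
          ext i
          simp only [Finset.mem_filter, Finset.mem_univ, true_and, Finset.mem_insert]
          constructor
          · rintro ⟨h1, h2⟩
            rcases eq_or_ne i J with rfl | hiJ
            · exact Or.inl rfl
            · have h3 : i.val ≠ j := fun h => hiJ (Fin.ext (by rw [h, hJv]))
              exact Or.inr ⟨by omega, h2⟩
          · rintro (rfl | ⟨h1, h2⟩)
            · exact ⟨by omega, fun i' hi' => hnew i' (by omega)⟩
            · exact ⟨by omega, h2⟩
        have hz' : ∀ i ∈ Fj, (if a J = a i then (0:M)
            else s (KPT_T j (KPT_T (j+1) a J) i)) = s (KPT_T j (KPT_T (j+1) a J) i) := by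
          intro i hi
          rw [hFj, Finset.mem_filter] at hi
          rw [if_neg]
          exact fun h => hnew i hi.2.1 h.symm
        rw [hF, Finset.sum_insert hJF, hstep1, hstep2, Finset.sum_congr rfl hz']
        exact add_comm _ _
      · have hF : Finset.univ.filter
            (fun i : Fin n => i.val < j + 1 ∧ ∀ i' : Fin n, i'.val < i.val → a i' ≠ a i)
            = Fj := by
          rw [hFj]
          ext i
          simp only [Finset.mem_filter, Finset.mem_univ, true_and]
          constructor
          · rintro ⟨h1, h2⟩
            have hiJ : i ≠ J := by
              rintro rfl
              exact hnew fun i' hi' => h2 i' (by omega)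
            have h3 : i.val ≠ j := fun h => hiJ (Fin.ext (by rw [h, hJv]))
            exact ⟨by omega, h2⟩
          · rintro ⟨h1, h2⟩
            exact ⟨by omega, h2⟩
        push_neg at hnew
        obtain ⟨i1, hi1j, hi1⟩ := hnew
        set t := Finset.univ.filter (fun i : Fin n => i.val < j ∧ a i = a J) with ht
        have htne : t.Nonempty :=
          ⟨i1, Finset.mem_filter.mpr ⟨Finset.mem_univ _, hi1j, hi1⟩⟩
        set i0 := t.min' htne with hi0
        have hi0t := Finset.mem_filter.mp (t.min'_mem htne)
        obtain ⟨-, hi0j, hi0J⟩ := hi0t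
        have hi0F : i0 ∈ Fj := by
          rw [hFj]
          refine Finset.mem_filter.mpr ⟨Finset.mem_univ _, hi0j, fun i' hi' hcon => ?_⟩
          have hle : i0 ≤ i' := t.min'_le i'
            (Finset.mem_filter.mpr ⟨Finset.mem_univ _, by omega, hcon.trans hi0J⟩)
          have hle' := Fin.le_def.mp hle
          omega
        have hsum0 : ∑ i ∈ Fj, (if a J = a i then (0:M)
            else s (KPT_T j (KPT_T (j+1) a J) i)) = 0 := by
          have h0 : ∀ i ∈ Fj, i ≠ i0 →
              (if a J = a i then s (KPT_T j (KPT_T (j+1) a J) i) else 0) = 0 := by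
            intro i hi hne
            rw [if_neg]
            intro hJi
            rw [hFj, Finset.mem_filter] at hi
            obtain ⟨-, hij, hinew⟩ := hi
            have hit : i ∈ t := by
              rw [ht]
              exact Finset.mem_filter.mpr ⟨Finset.mem_univ _, hij, hJi.symm⟩
            have hle := Fin.le_def.mp (t.min'_le i hit)
            have hlt : i0.val < i.val := by
              rcases Nat.lt_or_ge i0.val i.val with h | h
              · exact h
              · exact absurd (Fin.ext (by omega) : i = i0) hne
            exact hinew i0 hlt (hi0J.trans hJi)
          have hsingle : ∑ i ∈ Fj, (if a J = a i then s (KPT_T j (KPT_T (j+1) a J) i)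
              else 0) = s (KPT_T j (KPT_T (j+1) a J) i0) := by
            rw [Finset.sum_eq_single_of_mem i0 hi0F h0, if_pos hi0J.symm]
          have hdiff : ∀ i ∈ Fj, (if a J = a i then (0:M)
              else s (KPT_T j (KPT_T (j+1) a J) i))
              = s (KPT_T j (KPT_T (j+1) a J) i)
                - (if a J = a i then s (KPT_T j (KPT_T (j+1) a J) i) else 0) := by
            intro i _
            split_ifs <;> simp
          rw [Finset.sum_congr rfl hdiff, Finset.sum_sub_distrib, hsingle, ← hstep2]
          have hd0 : KPT_T j (KPT_T (j+1) a J) i0 = KPT_T (j+1) a J := by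
            apply KPT_T_fixed
            rw [heval i0 hi0j, hi0J, sub_self]
          rw [hd0, sub_self]
        rw [hF, hstep1, hsum0, add_zero]
    exact main
end

section
/- Let G = D₈ be the dihedral group of order 8, generated by ρ of order 4 and σ of order 2 with σρσ = ρ^{-1}, and let H = ⟨ρ⟩ ≅ ℤ/4ℤ. Let G act on K = ℂ(z) through the quotient G/H ≅ ℤ/2ℤ, with the nontrivial element acting by z ↦ −z. Then the restriction map H¹(G, K^×) → H¹(H, K^×)^{G/H} = Hom(H, ℂ^×) is not surjective; in fact |H¹(G, K^×)| = 2 while Hom(H, ℂ^×) ≅ ℤ/4ℤ. -/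
noncomputable section

/-- The action of `g ∈ D₈` on `ℂ(z)`, given an action `φ` by `ℂ`-algebra automorphisms. -/
def D8act (φ : DihedralGroup 4 →* (RatFunc ℂ ≃ₐ[ℂ] RatFunc ℂ))
    (g : DihedralGroup 4) (x : RatFunc ℂ) : RatFunc ℂ :=
  φ g x

/-- A 1-cocycle on `G = D₈` with values in `ℂ(z)ˣ`. -/
def D8IsCocycle (φ : DihedralGroup 4 →* (RatFunc ℂ ≃ₐ[ℂ] RatFunc ℂ))
    (f : DihedralGroup 4 → (RatFunc ℂ)ˣ) : Prop :=
  ∀ g h : DihedralGroup 4, ((f (g * h) : RatFunc ℂ)) = (f g : RatFunc ℂ) * D8act φ g (f h)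

/-- Two cocycles are cohomologous when they differ by a coboundary. -/
def D8Cohomologous (φ : DihedralGroup 4 →* (RatFunc ℂ ≃ₐ[ℂ] RatFunc ℂ))
    (f f' : {f : DihedralGroup 4 → (RatFunc ℂ)ˣ // D8IsCocycle φ f}) : Prop :=
  ∃ β : (RatFunc ℂ)ˣ, ∀ g : DihedralGroup 4,
    ((f.1 g : RatFunc ℂ)) = (f'.1 g : RatFunc ℂ) * (D8act φ g β * (↑β⁻¹ : RatFunc ℂ))

namespace D8Aux

open DihedralGroup

instance : CharZero (RatFunc ℂ) :=
  charZero_of_injective_algebraMap (algebraMap ℂ (RatFunc ℂ)).injective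

/-! ### Generic power lemmas -/

lemma pow_mod4 {M : Type*} [Monoid M] {u : M} (hu : u ^ 4 = 1) (n : ℕ) :
    u ^ (n % 4) = u ^ n := by
  conv_rhs => rw [← Nat.mod_add_div n 4]
  rw [pow_add, pow_mul, hu, one_pow, mul_one]

lemma pow_val_add {M : Type*} [Monoid M] {u : M} (hu : u ^ 4 = 1) (i j : ZMod 4) :
    u ^ (i + j).val = u ^ i.val * u ^ j.val := by
  rw [ZMod.val_add, pow_mod4 hu, pow_add]

lemma pow_val_sub {M : Type*} [Monoid M] {u : M} (hu : u ^ 2 = 1) (i j : ZMod 4) :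
    u ^ (j - i).val = u ^ i.val * u ^ j.val := by
  have hu4 : u ^ 4 = 1 := by rw [show (4 : ℕ) = 2 * 2 from rfl, pow_mul, hu, one_pow]
  have h := pow_val_add hu4 (j - i) i
  rw [sub_add_cancel] at h
  have h2 : (j - i).val + 2 * i.val = ((j - i).val + i.val) + i.val := by ring
  calc u ^ (j - i).val = u ^ ((j - i).val + 2 * i.val) := by
        rw [pow_add, pow_mul, hu, one_pow, mul_one]
    _ = u ^ ((j - i).val + i.val) * u ^ i.val := by rw [h2, pow_add]
    _ = u ^ j.val * u ^ i.val := by rw [pow_add, ← h]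
    _ = u ^ i.val * u ^ j.val := by rw [← pow_add, ← pow_add, Nat.add_comm]

/-- The monoid hom `Multiplicative (ZMod 4) →* M` sending the generator to an element
of fourth power one. -/
def zmodHom {M : Type*} [Monoid M] (u : M) (hu : u ^ 4 = 1) : Multiplicative (ZMod 4) →* M where
  toFun m := u ^ (Multiplicative.toAdd m).val
  map_one' := by simp
  map_mul' m m' := by
    show u ^ (Multiplicative.toAdd (m * m')).val = _
    rw [toAdd_mul]
    exact pow_val_add hu _ _

lemma zmodHom_apply {M : Type*} [Monoid M] (u : M) (hu : u ^ 4 = 1)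
    (m : Multiplicative (ZMod 4)) : zmodHom u hu m = u ^ (Multiplicative.toAdd m).val := rfl

lemma mzmod_hom_ext {M : Type*} [Monoid M] {χ₁ χ₂ : Multiplicative (ZMod 4) →* M}
    (h : χ₁ (Multiplicative.ofAdd 1) = χ₂ (Multiplicative.ofAdd 1)) : χ₁ = χ₂ := by
  refine MonoidHom.ext fun m => ?_
  have hm : m = Multiplicative.ofAdd (1 : ZMod 4) ^ (Multiplicative.toAdd m).val := by
    rw [← ofAdd_nsmul, nsmul_eq_mul, mul_one, ZMod.natCast_val, ZMod.cast_id, ofAdd_toAdd]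
  rw [hm, map_pow, map_pow, h]

/-! ### Dihedral group facts -/

lemma inv_r (a : ZMod 4) : (r a : DihedralGroup 4)⁻¹ = r (-a) :=
  inv_eq_of_mul_eq_one_right (by rw [r_mul_r, add_neg_cancel]; exact one_def.symm)

lemma r_one_zpow (z : ℤ) : (r 1 : DihedralGroup 4) ^ z = r (z : ZMod 4) := by
  cases z with
  | ofNat n =>
      rw [Int.ofNat_eq_coe, zpow_natCast, r_one_pow]
      congr 1
  | negSucc n =>
      rw [zpow_negSucc, r_one_pow, inv_r]
      congr 1

lemma mem_zpH (k : ZMod 4) : (r k : DihedralGroup 4) ∈ Subgroup.zpowers (r 1) := by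
  refine ⟨(k.val : ℤ), ?_⟩
  show (r 1 : DihedralGroup 4) ^ (k.val : ℤ) = r k
  rw [r_one_zpow]
  congr 1
  push_cast
  rw [ZMod.natCast_val, ZMod.cast_id]

/-- Discrete log on the rotation subgroup. -/
def dLog : DihedralGroup 4 → ZMod 4
  | r k => k
  | sr _ => 0

/-- The rotation subgroup of `D₈` is `ℤ/4`. -/
def e1 : Multiplicative (ZMod 4) ≃* Subgroup.zpowers (r 1 : DihedralGroup 4) where
  toFun m := ⟨r (Multiplicative.toAdd m), mem_zpH _⟩
  invFun h := Multiplicative.ofAdd (dLog h.1)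
  left_inv m := by simp [dLog]
  right_inv h := by
    obtain ⟨z, hz⟩ := Subgroup.mem_zpowers_iff.mp h.2
    apply Subtype.ext
    show r (dLog h.1) = h.1
    rw [← hz, r_one_zpow]
    rfl
  map_mul' m m' := by
    apply Subtype.ext
    show r (Multiplicative.toAdd (m * m')) = r (Multiplicative.toAdd m) * r (Multiplicative.toAdd m')
    rw [r_mul_r, toAdd_mul]

/-! ### The action -/

section Phi

variable (φ : DihedralGroup 4 →* (RatFunc ℂ ≃ₐ[ℂ] RatFunc ℂ))

lemma phi_r (hρ : φ (r 1) = AlgEquiv.refl) (k : ZMod 4) : φ (r k) = 1 := by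
  have h : (r k : DihedralGroup 4) = r 1 ^ k.val := by
    rw [r_one_pow, ZMod.natCast_val, ZMod.cast_id]
  rw [h, map_pow, hρ, ← AlgEquiv.aut_one, one_pow]

lemma act_r (hρ : φ (r 1) = AlgEquiv.refl) (k : ZMod 4) (x : RatFunc ℂ) :
    D8act φ (r k) x = x := by
  rw [D8act, phi_r φ hρ, AlgEquiv.one_apply]

lemma phi_sr (hρ : φ (r 1) = AlgEquiv.refl) (k : ZMod 4) : φ (sr k) = φ (sr 0) := by
  have h : (sr k : DihedralGroup 4) = sr 0 * r k := by rw [sr_mul_r, zero_add]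
  rw [h, map_mul, phi_r φ hρ, mul_one]

lemma act_sr (hρ : φ (r 1) = AlgEquiv.refl) (k : ZMod 4) (x : RatFunc ℂ) :
    D8act φ (sr k) x = φ (sr 0) x := by
  rw [D8act, phi_sr φ hρ]

lemma s_s (x : RatFunc ℂ) : φ (sr 0) (φ (sr 0) x) = x := by
  have h : φ (sr 0) * φ (sr 0) = 1 := by
    rw [← map_mul, sr_mul_self, map_one]
  have h2 := congrArg (fun e : RatFunc ℂ ≃ₐ[ℂ] RatFunc ℂ => e x) h
  simpa [AlgEquiv.aut_mul] using h2

variable {φ}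
variable {f : DihedralGroup 4 → (RatFunc ℂ)ˣ}

lemma f_one (hf : D8IsCocycle φ f) : (f 1 : RatFunc ℂ) = 1 := by
  have h := hf 1 1
  rw [mul_one] at h
  have hact : D8act φ 1 ((f 1 : RatFunc ℂ)) = (f 1 : RatFunc ℂ) := by
    rw [D8act, map_one, AlgEquiv.one_apply]
  rw [hact] at h
  have hne : (f 1 : RatFunc ℂ) ≠ 0 := Units.ne_zero _
  have h' : (f 1 : RatFunc ℂ) * 1 = (f 1 : RatFunc ℂ) * (f 1 : RatFunc ℂ) := by
    rw [mul_one]; exact h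
  exact (mul_left_cancel₀ hne h').symm

lemma f_r_pow (hρ : φ (r 1) = AlgEquiv.refl) (hf : D8IsCocycle φ f) (n : ℕ) :
    (f (r 1 ^ n) : RatFunc ℂ) = (f (r 1) : RatFunc ℂ) ^ n := by
  induction n with
  | zero => rw [pow_zero, pow_zero]; exact f_one hf
  | succ n ih =>
      have h := hf (r 1 ^ n) (r 1)
      have hact : D8act φ (r 1 ^ n) ((f (r 1) : RatFunc ℂ)) = (f (r 1) : RatFunc ℂ) := by
        rw [D8act, map_pow, hρ, ← AlgEquiv.aut_one, one_pow, AlgEquiv.one_apply]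
      rw [hact, ih] at h
      rw [pow_succ, pow_succ]
      exact h

lemma f_r (hρ : φ (r 1) = AlgEquiv.refl) (hf : D8IsCocycle φ f) (k : ZMod 4) :
    (f (r k) : RatFunc ℂ) = (f (r 1) : RatFunc ℂ) ^ k.val := by
  have h : (r k : DihedralGroup 4) = r 1 ^ k.val := by
    rw [r_one_pow, ZMod.natCast_val, ZMod.cast_id]
  rw [h]
  exact f_r_pow hρ hf k.val

lemma a4 (hρ : φ (r 1) = AlgEquiv.refl) (hf : D8IsCocycle φ f) :
    (f (r 1) : RatFunc ℂ) ^ 4 = 1 := by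
  have h := f_r_pow hρ hf 4
  have h4 : (r 1 : DihedralGroup 4) ^ (4 : ℕ) = 1 := by
    rw [r_one_pow, show ((4 : ℕ) : ZMod 4) = 0 by decide]
    rfl
  rw [h4, f_one hf] at h
  exact h.symm

lemma bsb (hf : D8IsCocycle φ f) :
    (f (sr 0) : RatFunc ℂ) * φ (sr 0) ((f (sr 0) : RatFunc ℂ)) = 1 := by
  have h := hf (sr 0) (sr 0)
  rw [sr_mul_self, f_one hf] at h
  simp only [D8act] at h
  exact h.symm

lemma s_a (hρ : φ (r 1) = AlgEquiv.refl) (hf : D8IsCocycle φ f) :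
    φ (sr 0) ((f (r 1) : RatFunc ℂ)) = (f (r 1) : RatFunc ℂ) ^ 3 := by
  have h1 := hf (sr 0) (r 1)
  rw [sr_mul_r, zero_add] at h1
  simp only [D8act] at h1
  have h2 := hf (r 3) (sr 0)
  rw [r_mul_sr, show ((0 : ZMod 4) - 3) = 1 by decide] at h2
  rw [act_r φ hρ] at h2
  rw [f_r hρ hf 3, show ((3 : ZMod 4)).val = 3 by decide] at h2
  -- h1 : f (sr 1) = b * s a ; h2 : f (sr 1) = a^3 * b
  have hb : (f (sr 0) : RatFunc ℂ) ≠ 0 := Units.ne_zero _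
  have hcomb : (f (sr 0) : RatFunc ℂ) * φ (sr 0) ((f (r 1) : RatFunc ℂ)) =
      (f (sr 0) : RatFunc ℂ) * (f (r 1) : RatFunc ℂ) ^ 3 := by
    linear_combination h1.symm.trans h2
  exact mul_left_cancel₀ hb hcomb

lemma a_pm (hρ : φ (r 1) = AlgEquiv.refl) (hf : D8IsCocycle φ f) :
    (f (r 1) : RatFunc ℂ) = 1 ∨ (f (r 1) : RatFunc ℂ) = -1 := by
  set a : RatFunc ℂ := (f (r 1) : RatFunc ℂ) with ha_def
  have h4 : a ^ 4 = 1 := a4 hρ hf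
  have ha0 : a ≠ 0 := Units.ne_zero _
  set i : RatFunc ℂ := algebraMap ℂ (RatFunc ℂ) Complex.I with hi_def
  have hi2 : i ^ 2 = -1 := by
    rw [hi_def, ← map_pow, Complex.I_sq, map_neg, map_one]
  have hfac : (a - 1) * (a + 1) * ((a - i) * (a + i)) = 0 := by
    linear_combination h4 + (1 - a ^ 2) * hi2
  have hs3 := s_a hρ hf
  rcases mul_eq_zero.mp hfac with h | h
  · rcases mul_eq_zero.mp h with h | h
    · left; exact sub_eq_zero.mp h
    · right; exact eq_neg_of_add_eq_zero_left h
  · exfalso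
    have hsa : φ (sr 0) a = a := by
      rcases mul_eq_zero.mp h with h' | h'
      · rw [sub_eq_zero.mp h', hi_def, AlgEquiv.commutes]
      · rw [eq_neg_of_add_eq_zero_left h', hi_def, map_neg, AlgEquiv.commutes]
    have ha2 : a ^ 2 = -1 := by
      rcases mul_eq_zero.mp h with h' | h'
      · rw [sub_eq_zero.mp h', hi2]
      · rw [eq_neg_of_add_eq_zero_left h', neg_sq, hi2]
    have h3 : a = a ^ 3 := by rw [← hs3]; exact hsa.symm
    have h2a : a = -a := by
      calc a = a ^ 3 := h3
        _ = a * a ^ 2 := by ring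
        _ = -a := by rw [ha2]; ring
    have h20 : (2 : RatFunc ℂ) * a = 0 := by linear_combination h2a
    rcases mul_eq_zero.mp h20 with h' | h'
    · exact (two_ne_zero) h'
    · exact ha0 h'

lemma f_sr (hρ : φ (r 1) = AlgEquiv.refl) (hf : D8IsCocycle φ f) (k : ZMod 4) :
    (f (sr k) : RatFunc ℂ) = (f (sr 0) : RatFunc ℂ) * (f (r 1) : RatFunc ℂ) ^ k.val := by
  have h := hf (sr 0) (r k)
  rw [sr_mul_r, zero_add] at h
  simp only [D8act] at h
  have hs : φ (sr 0) ((f (r k) : RatFunc ℂ)) = (f (r 1) : RatFunc ℂ) ^ k.val := by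
    rw [f_r hρ hf k, map_pow]
    rcases a_pm hρ hf with ha | ha
    · rw [ha, map_one]
    · rw [ha, map_neg, map_one]
  rw [hs] at h
  exact h

lemma hilbert90 (hσ : φ (sr 0) RatFunc.X = - RatFunc.X)
    {u : RatFunc ℂ} (hu0 : u ≠ 0) (hu : u * φ (sr 0) u = 1) :
    ∃ β : RatFunc ℂ, β ≠ 0 ∧ φ (sr 0) β = u * β := by
  have hsu : φ (sr 0) u = u⁻¹ := eq_inv_of_mul_eq_one_left (by
    rw [mul_comm]; exact hu)
  have key : ∀ c : RatFunc ℂ,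
      φ (sr 0) (φ (sr 0) c + u⁻¹ * c) = u * (φ (sr 0) c + u⁻¹ * c) := by
    intro c
    rw [map_add, map_mul, s_s φ, map_inv₀, hsu, inv_inv]
    field_simp
    ring
  by_cases h1 : (1 : RatFunc ℂ) + u⁻¹ ≠ 0
  · refine ⟨φ (sr 0) 1 + u⁻¹ * 1, ?_, key 1⟩
    rw [map_one, mul_one]
    exact h1
  · push_neg at h1
    have hu1 : u = -1 := by
      have hinv : u⁻¹ = -1 := by linear_combination h1
      rw [← inv_inv u, hinv]
      norm_num
    refine ⟨φ (sr 0) RatFunc.X + u⁻¹ * RatFunc.X, ?_, key RatFunc.X⟩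
    rw [hσ, hu1]
    have hinv : ((-1 : RatFunc ℂ))⁻¹ = -1 := by norm_num
    rw [hinv]
    intro hzero
    have h2X : (-2 : RatFunc ℂ) * RatFunc.X = 0 := by linear_combination hzero
    rcases mul_eq_zero.mp h2X with h' | h'
    · norm_num at h'
    · exact RatFunc.X_ne_zero h'

lemma cohomologous_of_eq (hρ : φ (r 1) = AlgEquiv.refl)
    (hσ : φ (sr 0) RatFunc.X = - RatFunc.X)
    (F F' : {f : DihedralGroup 4 → (RatFunc ℂ)ˣ // D8IsCocycle φ f})
    (hee : (F.1 (r 1) : RatFunc ℂ) = (F'.1 (r 1) : RatFunc ℂ)) :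
    D8Cohomologous φ F F' := by
  obtain ⟨f, hf⟩ := F
  obtain ⟨f', hf'⟩ := F'
  simp only at hee ⊢
  have hb : (f (sr 0) : RatFunc ℂ) ≠ 0 := Units.ne_zero _
  have hb' : (f' (sr 0) : RatFunc ℂ) ≠ 0 := Units.ne_zero _
  have hsb : (f (sr 0) : RatFunc ℂ) * φ (sr 0) ((f (sr 0) : RatFunc ℂ)) = 1 := bsb hf
  have hsb' : (f' (sr 0) : RatFunc ℂ) * φ (sr 0) ((f' (sr 0) : RatFunc ℂ)) = 1 := bsb hf'
  have h1 : φ (sr 0) ((f (sr 0) : RatFunc ℂ)) = ((f (sr 0) : RatFunc ℂ))⁻¹ :=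
    eq_inv_of_mul_eq_one_left (by rw [mul_comm]; exact hsb)
  have h2 : φ (sr 0) ((f' (sr 0) : RatFunc ℂ)) = ((f' (sr 0) : RatFunc ℂ))⁻¹ :=
    eq_inv_of_mul_eq_one_left (by rw [mul_comm]; exact hsb')
  set u : RatFunc ℂ := (f (sr 0) : RatFunc ℂ) * ((f' (sr 0) : RatFunc ℂ))⁻¹ with hu_def
  have hu0 : u ≠ 0 := mul_ne_zero hb (inv_ne_zero hb')
  have hsu : u * φ (sr 0) u = 1 := by
    rw [hu_def, map_mul, map_inv₀, h1, h2, inv_inv]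
    field_simp
  obtain ⟨β, hβ0, hβ⟩ := hilbert90 hσ hu0 hsu
  refine ⟨Units.mk0 β hβ0, ?_⟩
  have hβinv : ((Units.mk0 β hβ0)⁻¹ : (RatFunc ℂ)ˣ) = (Units.mk0 β hβ0)⁻¹ := rfl
  intro g
  have hβcoe : ((Units.mk0 β hβ0 : (RatFunc ℂ)ˣ) : RatFunc ℂ) = β := rfl
  have hβicoe : (((Units.mk0 β hβ0)⁻¹ : (RatFunc ℂ)ˣ) : RatFunc ℂ) = β⁻¹ := by
    rw [Units.val_inv_eq_inv_val, hβcoe]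
  cases g with
  | r k =>
      rw [act_r φ hρ, hβcoe, hβicoe, mul_inv_cancel₀ hβ0, mul_one]
      rw [f_r hρ hf, f_r hρ hf', hee]
  | sr k =>
      rw [act_sr φ hρ, hβcoe, hβicoe, hβ]
      rw [f_sr hρ hf, f_sr hρ hf', hee, hu_def]
      field_simp

/-! ### The two basic cocycles -/

lemma one_cocycle : D8IsCocycle φ (fun _ => 1) := by
  intro g h
  simp [D8act]

/-- The sign cocycle (in fact a character of `D₈`). -/
def eps : DihedralGroup 4 → (RatFunc ℂ)ˣ
  | r k => (-1) ^ k.val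
  | sr k => (-1) ^ k.val

lemma eps_cocycle (hρ : φ (r 1) = AlgEquiv.refl) : D8IsCocycle φ eps := by
  have hn2 : ((-1 : RatFunc ℂ)) ^ 2 = 1 := neg_one_sq
  have hn4 : ((-1 : RatFunc ℂ)) ^ 4 = 1 := by norm_num
  have coer : ∀ n : ℕ,
      (((-1 : (RatFunc ℂ)ˣ) ^ n : (RatFunc ℂ)ˣ) : RatFunc ℂ) = (-1 : RatFunc ℂ) ^ n := by
    intro n
    rw [Units.val_pow_eq_pow_val, Units.val_neg, Units.val_one]
  have hact : ∀ (g : DihedralGroup 4) (n : ℕ),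
      D8act φ g ((-1 : RatFunc ℂ) ^ n) = (-1 : RatFunc ℂ) ^ n := by
    intro g n
    simp only [D8act]
    rw [map_pow, map_neg, map_one]
  intro g h
  rcases g with i | i <;> rcases h with j | j <;>
    simp only [r_mul_r, r_mul_sr, sr_mul_r, sr_mul_sr, eps, coer, hact] <;>
    first
      | exact pow_val_add hn4 _ _
      | exact pow_val_sub hn2 _ _

end Phi

end D8Aux

open D8Aux DihedralGroup in
/-- Let `G = D₈` act on `K = ℂ(z)` through `G/H ≅ ℤ/2` (`H = ⟨ρ⟩ ≅ ℤ/4` acting trivially),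
with `σ` acting by `z ↦ -z`.  Then `H¹(G, Kˣ)` has order 2, the character group
`Hom(H, ℂˣ)` is `ℤ/4`, and the restriction map
`H¹(G, Kˣ) → H¹(H, Kˣ)^{G/H} = Hom(H, Kˣ)` is not surjective: some character of `H`
is not the restriction of any cocycle on `G`. -/
theorem D8_restriction_not_surjective
    (φ : DihedralGroup 4 →* (RatFunc ℂ ≃ₐ[ℂ] RatFunc ℂ))
    (hρ : φ (DihedralGroup.r 1) = AlgEquiv.refl)
    (hσ : φ (DihedralGroup.sr 0) RatFunc.X = - RatFunc.X) :
    Nat.card (Quot (D8Cohomologous φ)) = 2 ∧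
    Nonempty ((↥(Subgroup.zpowers (DihedralGroup.r 1 : DihedralGroup 4)) →* ℂˣ) ≃*
      Multiplicative (ZMod 4)) ∧
    ∃ χ : ↥(Subgroup.zpowers (DihedralGroup.r 1 : DihedralGroup 4)) →* (RatFunc ℂ)ˣ,
      ¬ ∃ f : DihedralGroup 4 → (RatFunc ℂ)ˣ, D8IsCocycle φ f ∧
        ∀ h : ↥(Subgroup.zpowers (DihedralGroup.r 1 : DihedralGroup 4)), f h = χ h := by
  -- the distinguished 4th root of unity in `ℂˣ`
  have hImul : Complex.I * -Complex.I = 1 := by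
    rw [mul_neg, Complex.I_mul_I]; norm_num
  have hImul' : -Complex.I * Complex.I = 1 := by
    rw [neg_mul, Complex.I_mul_I]; norm_num
  set iU : ℂˣ := ⟨Complex.I, -Complex.I, hImul, hImul'⟩ with hiU_def
  have hiU4 : iU ^ 4 = 1 := by
    apply Units.ext
    rw [Units.val_pow_eq_pow_val, Units.val_one]
    exact Complex.I_pow_four
  refine ⟨?_, ?_, ?_⟩
  · -- `H¹(G, Kˣ)` has exactly two elements
    rw [Nat.card_eq_two_iff]
    set c1 : {f : DihedralGroup 4 → (RatFunc ℂ)ˣ // D8IsCocycle φ f} :=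
      ⟨fun _ => 1, one_cocycle⟩ with hc1
    set c2 : {f : DihedralGroup 4 → (RatFunc ℂ)ˣ // D8IsCocycle φ f} :=
      ⟨eps, eps_cocycle hρ⟩ with hc2
    have hc1r : (c1.1 (r 1) : RatFunc ℂ) = 1 := Units.val_one
    have hc2r : (c2.1 (r 1) : RatFunc ℂ) = -1 := by
      show ((((-1 : (RatFunc ℂ)ˣ)) ^ (1 : ZMod 4).val : (RatFunc ℂ)ˣ) : RatFunc ℂ) = -1
      rw [show (1 : ZMod 4).val = 1 from rfl, pow_one, Units.val_neg, Units.val_one]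
    have hP : ∀ x y : {f : DihedralGroup 4 → (RatFunc ℂ)ˣ // D8IsCocycle φ f},
        D8Cohomologous φ x y →
        ((x.1 (r 1) : RatFunc ℂ) = 1) = ((y.1 (r 1) : RatFunc ℂ) = 1) := by
      rintro x y ⟨β, hβ⟩
      have h := hβ (r 1)
      rw [act_r φ hρ] at h
      have hβ1 : ((β : (RatFunc ℂ)ˣ) : RatFunc ℂ) * ((β⁻¹ : (RatFunc ℂ)ˣ) : RatFunc ℂ) = 1 := by
        rw [Units.val_inv_eq_inv_val]
        exact mul_inv_cancel₀ (Units.ne_zero β)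
      rw [hβ1, mul_one] at h
      rw [h]
    refine ⟨Quot.mk _ c1, Quot.mk _ c2, ?_, ?_⟩
    · intro hq
      have heq := congrArg
        (Quot.lift (fun f : {f : DihedralGroup 4 → (RatFunc ℂ)ˣ // D8IsCocycle φ f} =>
          ((f.1 (r 1) : RatFunc ℂ) = 1)) hP) hq
      simp only [Quot.lift_mk] at heq
      rw [hc1r, hc2r] at heq
      have : (-1 : RatFunc ℂ) = 1 := heq ▸ rfl
      norm_num at this
    · rw [Set.eq_univ_iff_forall]
      intro q
      induction q using Quot.ind with
      | mk F =>
        rcases a_pm hρ F.2 with ha | ha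
        · have : Quot.mk _ F = Quot.mk (D8Cohomologous φ) c1 :=
            Quot.sound (cohomologous_of_eq hρ hσ F c1 (by rw [ha, hc1r]))
          simp [this]
        · have : Quot.mk _ F = Quot.mk (D8Cohomologous φ) c2 :=
            Quot.sound (cohomologous_of_eq hρ hσ F c2 (by rw [ha, hc2r]))
          simp [this]
  · -- character group of `H` is `ℤ/4`
    set ψ : Multiplicative (ZMod 4) →* ℂˣ := zmodHom iU hiU4 with hψ_def
    have hψ4 : ψ ^ 4 = 1 := by
      apply MonoidHom.ext
      intro m
      rw [MonoidHom.pow_apply, MonoidHom.one_apply, hψ_def, zmodHom_apply,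
        ← pow_mul, mul_comm, pow_mul, hiU4, one_pow]
    set F : Multiplicative (ZMod 4) →* (Multiplicative (ZMod 4) →* ℂˣ) :=
      zmodHom ψ hψ4 with hF_def
    have hψ_one : ψ (Multiplicative.ofAdd (1 : ZMod 4)) = iU := by
      rw [hψ_def, zmodHom_apply, toAdd_ofAdd, show (1 : ZMod 4).val = 1 from rfl, pow_one]
    have hF_eval : ∀ k : Multiplicative (ZMod 4),
        F k (Multiplicative.ofAdd (1 : ZMod 4)) = iU ^ (Multiplicative.toAdd k).val := by
      intro k
      rw [hF_def, zmodHom_apply, MonoidHom.pow_apply, hψ_one]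
    have hinj : Function.Injective F := by
      rw [injective_iff_map_eq_one]
      intro k hk
      have h := congrArg (fun χ : Multiplicative (ZMod 4) →* ℂˣ =>
        χ (Multiplicative.ofAdd (1 : ZMod 4))) hk
      simp only [MonoidHom.one_apply] at h
      rw [hF_eval] at h
      have hI : Complex.I ^ (Multiplicative.toAdd k).val = 1 := by
        have := congrArg (Units.val) h
        rwa [Units.val_pow_eq_pow_val, Units.val_one] at this
      have hvlt : (Multiplicative.toAdd k).val < 4 := ZMod.val_lt _
      set v : ℕ := (Multiplicative.toAdd k).val with hv_def
      have hk1 : Multiplicative.toAdd k = 0 := by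
        interval_cases v
        · exact (ZMod.val_eq_zero _).mp hv_def.symm
        · rw [pow_one] at hI
          exact absurd hI (by simp [Complex.ext_iff])
        · rw [Complex.I_sq] at hI
          norm_num at hI
        · have h3 : Complex.I ^ 3 = -Complex.I := by
            rw [pow_succ, Complex.I_sq]; ring
          rw [h3] at hI
          have : Complex.I = -1 := by linear_combination -hI
          simp [Complex.ext_iff] at this
      have : k = Multiplicative.ofAdd (0 : ZMod 4) := by
        rw [← hk1, ofAdd_toAdd]
      rw [this]
      rfl
    have hsurj : Function.Surjective F := by
      intro χ
      have hx4 : χ (Multiplicative.ofAdd (1 : ZMod 4)) ^ 4 = 1 := by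
        rw [← map_pow, ← ofAdd_nsmul, show (4 • (1 : ZMod 4)) = 0 by decide]
        exact map_one χ
      set x : ℂˣ := χ (Multiplicative.ofAdd (1 : ZMod 4)) with hx_def
      have hx4' : (x : ℂ) ^ 4 = 1 := by
        rw [← Units.val_pow_eq_pow_val, hx4, Units.val_one]
      have hfac : ((x : ℂ) - 1) * ((x : ℂ) + 1) *
          (((x : ℂ) - Complex.I) * ((x : ℂ) + Complex.I)) = 0 := by
        linear_combination hx4' + (1 - (x : ℂ) ^ 2) * Complex.I_sq
      have hvex : ∃ v : ℕ, v < 4 ∧ (x : ℂ) = Complex.I ^ v := by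
        rcases mul_eq_zero.mp hfac with h | h
        · rcases mul_eq_zero.mp h with h | h
          · exact ⟨0, by norm_num, by rw [pow_zero]; exact sub_eq_zero.mp h⟩
          · refine ⟨2, by norm_num, ?_⟩
            rw [Complex.I_sq]
            exact eq_neg_of_add_eq_zero_left h
        · rcases mul_eq_zero.mp h with h | h
          · exact ⟨1, by norm_num, by rw [pow_one]; exact sub_eq_zero.mp h⟩
          · refine ⟨3, by norm_num, ?_⟩
            have h3 : Complex.I ^ 3 = -Complex.I := by
              rw [pow_succ, Complex.I_sq]; ring
            rw [h3]
            exact eq_neg_of_add_eq_zero_left h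
      obtain ⟨v, hv4, hxv⟩ := hvex
      refine ⟨Multiplicative.ofAdd ((v : ℕ) : ZMod 4), mzmod_hom_ext ?_⟩
      rw [hF_eval]
      apply Units.ext
      rw [Units.val_pow_eq_pow_val, toAdd_ofAdd, ZMod.val_cast_of_lt hv4]
      exact hxv.symm
    exact ⟨((MulEquiv.monoidHomCongrLeft e1).symm).trans
      (MulEquiv.ofBijective F ⟨hinj, hsurj⟩).symm⟩
  · -- a character of `H` not extending to a cocycle on `G`
    set iK : (RatFunc ℂ)ˣ := Units.map (algebraMap ℂ (RatFunc ℂ)).toMonoidHom iU with hiK_def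
    have hiK4 : iK ^ 4 = 1 := by
      rw [hiK_def, ← map_pow, hiU4, map_one]
    refine ⟨(zmodHom iK hiK4).comp e1.symm.toMonoidHom, ?_⟩
    rintro ⟨f, hf, hres⟩
    have hgen : e1.symm ⟨r 1, mem_zpH 1⟩ = Multiplicative.ofAdd (1 : ZMod 4) := by
      rw [MulEquiv.symm_apply_eq]
      apply Subtype.ext
      rfl
    have h := hres ⟨r 1, mem_zpH 1⟩
    rw [MonoidHom.comp_apply] at h
    rw [show (e1.symm.toMonoidHom ⟨r 1, mem_zpH 1⟩ : Multiplicative (ZMod 4)) =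
      Multiplicative.ofAdd (1 : ZMod 4) from hgen] at h
    rw [zmodHom_apply, toAdd_ofAdd, show (1 : ZMod 4).val = 1 from rfl, pow_one] at h
    have hval : (f (r 1) : RatFunc ℂ) = algebraMap ℂ (RatFunc ℂ) Complex.I := by
      rw [show ((⟨r 1, mem_zpH 1⟩ : Subgroup.zpowers (r 1 : DihedralGroup 4)) :
        DihedralGroup 4) = r 1 from rfl] at h
      rw [h, hiK_def]
      rfl
    rcases a_pm hρ hf with ha | ha
    · rw [hval] at ha
      have h1 : algebraMap ℂ (RatFunc ℂ) Complex.I = algebraMap ℂ (RatFunc ℂ) 1 := by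
        rw [map_one]; exact ha
      have := (algebraMap ℂ (RatFunc ℂ)).injective h1
      simp [Complex.ext_iff] at this
    · rw [hval] at ha
      have h1 : algebraMap ℂ (RatFunc ℂ) Complex.I = algebraMap ℂ (RatFunc ℂ) (-1) := by
        rw [map_neg, map_one]; exact ha
      have := (algebraMap ℂ (RatFunc ℂ)).injective h1
      simp [Complex.ext_iff] at this

end
end

section
/- Let k ⊆ k' ⊆ K with K a finitely generated field extension of k and k' the algebraic closure of k in K. Then the algebraic closure of k in the rational function field K(t) equals k'; in particular the degree [k' : k] is unchanged when K is replaced by K(t). -/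
/-- Let `K/k` be a finitely generated field extension and `k'` the algebraic closure of `k`
in `K`.  Then the algebraic closure of `k` in the rational function field `K(t)` is again
`k'`: the integral closure of `k` in `RatFunc K` is the image of the integral closure of `k`
in `K`.  In particular `[k' : k]` is unchanged when `K` is replaced by `K(t)`. -/
theorem algebraic_closure_unchanged_in_ratfunc
    (k K : Type*) [Field k] [Field K] [Algebra k K]
    (hfg : ∃ s : Finset K, IntermediateField.adjoin k (s : Set K) = ⊤)
    [IsScalarTower k K (RatFunc K)] :
    integralClosure k (RatFunc K) =
      Subalgebra.map (IsScalarTower.toAlgHom k K (RatFunc K)) (integralClosure k K) := by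
  apply le_antisymm
  · intro x hx
    have hx' : IsIntegral k x := hx
    -- x is integral over K
    have hK : IsIntegral K x := hx'.tower_top
    -- hence integral over K[X]
    have hKX : IsIntegral (Polynomial K) x := hK.tower_top
    -- K[X] is integrally closed in RatFunc K
    obtain ⟨p, hp⟩ := IsIntegrallyClosed.isIntegral_iff.mp hKX
    -- p is algebraic over K, hence constant
    have hpalg : IsAlgebraic K p := by
      have : IsAlgebraic K x := hK.isAlgebraic
      rw [← hp] at this
      exact (isAlgebraic_algebraMap_iff (IsFractionRing.injective (Polynomial K) (RatFunc K))).mp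
        this
    have hdeg : p.natDegree = 0 := by
      by_contra h
      exact (p.transcendental h (mem_nonZeroDivisors_of_ne_zero
        (Polynomial.leadingCoeff_ne_zero.mpr (fun h0 => h (by simp [h0]))))) hpalg
    obtain ⟨c, rfl⟩ := Polynomial.natDegree_eq_zero.mp hdeg
    have hx2 : x = algebraMap K (RatFunc K) c := by
      rw [← hp]; simp [RatFunc.algebraMap_C]
    refine ⟨c, ?_, ?_⟩
    · have : IsIntegral k (algebraMap K (RatFunc K) c) := hx2 ▸ hx'
      exact (isIntegral_algebraMap_iff
        (algebraMap K (RatFunc K)).injective).mp this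
    · exact hx2.symm
  · rintro _ ⟨y, hy, rfl⟩
    exact (hy : IsIntegral k y).map (IsScalarTower.toAlgHom k K (RatFunc K))
end
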